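/- Let n ≥ 2, let A be a real n×n singular irreducible M-matrix, and let L_G be the FSAI lower triangular factor associated with an admissible pattern S_L. Then the product L_G A is a singular M-matrix. -/

import Mathlib

open Matrix

/-- The spectral radius of a real matrix: the maximum modulus of its complex
eigenvalues (supremum of moduli of elements of the complex spectrum). -/
noncomputable def specRad {n : ℕ} (B : Matrix (Fin n) (Fin n) ℝ) : ℝ :=
  sSup ((fun z : ℂ => ‖z‖) '' spectrum ℂ (B.map Complex.ofReal))

/-- A real square matrix is a Z-matrix if its off-diagonal entries are nonpositive. -/
def IsZMatrix {n : ℕ} (A : Matrix (Fin n) (Fin n) ℝ) : Prop :=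
  ∀ i j, i ≠ j → A i j ≤ 0

/-- A Z-matrix `A` is a nonsingular M-matrix if `A = s • 1 - B` with `B`
entrywise nonnegative and `s > ρ(B)`. -/
def IsNonsingularMMatrix {n : ℕ} (A : Matrix (Fin n) (Fin n) ℝ) : Prop :=
  IsZMatrix A ∧ ∃ (s : ℝ) (B : Matrix (Fin n) (Fin n) ℝ),
    (∀ i j, 0 ≤ B i j) ∧ specRad B < s ∧ A = s • (1 : Matrix (Fin n) (Fin n) ℝ) - B

/-- A Z-matrix `A` is a singular M-matrix if `A = ρ(B) • 1 - B` with `B`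
entrywise nonnegative. -/
def IsSingularMMatrix {n : ℕ} (A : Matrix (Fin n) (Fin n) ℝ) : Prop :=
  IsZMatrix A ∧ ∃ B : Matrix (Fin n) (Fin n) ℝ,
    (∀ i j, 0 ≤ B i j) ∧ A = specRad B • (1 : Matrix (Fin n) (Fin n) ℝ) - B

/-- A matrix is irreducible if its directed graph (edge `i → j` iff `A i j ≠ 0`)
is strongly connected. -/
def IsIrreducibleMatrix {n : ℕ} (A : Matrix (Fin n) (Fin n) ℝ) : Prop :=
  ∀ i j : Fin n, Relation.ReflTransGen (fun a b : Fin n => A a b ≠ 0) i j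

/-- Lower triangular real matrix. -/
def IsLowerTri {n : ℕ} (L : Matrix (Fin n) (Fin n) ℝ) : Prop :=
  ∀ i j : Fin n, i < j → L i j = 0

/-- Upper triangular real matrix. -/
def IsUpperTri {n : ℕ} (U : Matrix (Fin n) (Fin n) ℝ) : Prop :=
  ∀ i j : Fin n, j < i → U i j = 0

/-- `L` is an FSAI lower triangular factor of `A` for the pattern `S`:
`L` is lower triangular, vanishes off the pattern, and `(L * A) i j = δ i j`
on the pattern. -/
def IsFSAILowerFactor {n : ℕ} (A L : Matrix (Fin n) (Fin n) ℝ)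
    (S : Set (Fin n × Fin n)) : Prop :=
  IsLowerTri L ∧ (∀ p : Fin n × Fin n, p ∉ S → L p.1 p.2 = 0) ∧
    ∀ p : Fin n × Fin n, p ∈ S → (L * A) p.1 p.2 = if p.1 = p.2 then 1 else 0

/-- `U` is an FSAI upper triangular factor of `A` for the pattern `S`:
`U` is upper triangular, vanishes off the pattern, and `(A * U) i j = δ i j`
on the pattern. -/
def IsFSAIUpperFactor {n : ℕ} (A U : Matrix (Fin n) (Fin n) ℝ)
    (S : Set (Fin n × Fin n)) : Prop :=
  IsUpperTri U ∧ (∀ p : Fin n × Fin n, p ∉ S → U p.1 p.2 = 0) ∧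
    ∀ p : Fin n × Fin n, p ∈ S → (A * U) p.1 p.2 = if p.1 = p.2 then 1 else 0

section AuxSect
open Filter Topology
namespace Aux
variable {n : ℕ}

noncomputable def cm (B : Matrix (Fin n) (Fin n) ℝ) : Matrix (Fin n) (Fin n) ℂ :=
  B.map Complex.ofReal

lemma cm_pow (B : Matrix (Fin n) (Fin n) ℝ) (k : ℕ) : cm (B ^ k) = (cm B) ^ k := by
  have : cm (B ^ k) = (Complex.ofRealHom.mapMatrix : Matrix (Fin n) (Fin n) ℝ →+* _) (B ^ k) := rfl
  rw [this, map_pow]; rfl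

lemma mem_spectrum_iff (M : Matrix (Fin n) (Fin n) ℂ) (μ : ℂ) :
    μ ∈ spectrum ℂ M ↔ ∃ v, v ≠ 0 ∧ M.mulVec v = μ • v := by
  classical
  rw [spectrum.mem_iff]
  have halg : (algebraMap ℂ (Matrix (Fin n) (Fin n) ℂ)) μ = μ • 1 := by
    rw [Algebra.algebraMap_eq_smul_one]
  rw [halg, Matrix.isUnit_iff_isUnit_det, isUnit_iff_ne_zero, not_not,
    ← Matrix.exists_mulVec_eq_zero_iff]
  constructor
  · rintro ⟨v, hv, h⟩
    refine ⟨v, hv, ?_⟩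
    funext i
    have h2 := congrFun h i
    simp [Matrix.sub_mulVec, Matrix.smul_mulVec, Matrix.one_mulVec, sub_eq_zero] at h2
    simpa using h2.symm
  · rintro ⟨v, hv, h⟩
    refine ⟨v, hv, ?_⟩
    funext i
    simp [Matrix.sub_mulVec, Matrix.smul_mulVec, Matrix.one_mulVec, sub_eq_zero, h]

lemma specRad_def (B : Matrix (Fin n) (Fin n) ℝ) :
    specRad B = sSup ((fun z : ℂ => ‖z‖) '' spectrum ℂ (cm B)) := rfl

lemma abs_le_specRad (B : Matrix (Fin n) (Fin n) ℝ) {μ : ℂ} (h : μ ∈ spectrum ℂ (cm B)) :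
    ‖μ‖ ≤ specRad B :=
  le_csSup (((Matrix.finite_spectrum (cm B)).image _).bddAbove) ⟨μ, h, rfl⟩

section nonemp
attribute [local instance] Matrix.linftyOpNormedRing Matrix.linftyOpNormedAlgebra
  Matrix.linftyOpNormedSpace

lemma spectrum_nonempty [Nonempty (Fin n)] (M : Matrix (Fin n) (Fin n) ℂ) :
    (spectrum ℂ M).Nonempty := spectrum.nonempty M

end nonemp

lemma exists_specRad_eq [Nonempty (Fin n)] (B : Matrix (Fin n) (Fin n) ℝ) :
    ∃ μ ∈ spectrum ℂ (cm B), ‖μ‖ = specRad B := by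
  have hne : ((fun z : ℂ => ‖z‖) '' spectrum ℂ (cm B)).Nonempty :=
    (spectrum_nonempty (cm B)).image _
  have := hne.csSup_mem ((Matrix.finite_spectrum (cm B)).image _)
  rw [specRad_def]
  obtain ⟨μ, hμ, h⟩ := this
  exact ⟨μ, hμ, h⟩

lemma specRad_nonneg [Nonempty (Fin n)] (B : Matrix (Fin n) (Fin n) ℝ) : 0 ≤ specRad B := by
  obtain ⟨μ, _, h⟩ := exists_specRad_eq B
  rw [← h]; exact norm_nonneg μ

/-- a real eigenvalue is in the complex spectrum -/
lemma real_eig_mem (B : Matrix (Fin n) (Fin n) ℝ) {t : ℝ} {v : Fin n → ℝ} (hv : v ≠ 0)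
    (h : B.mulVec v = t • v) : (t : ℂ) ∈ spectrum ℂ (cm B) := by
  classical
  rw [mem_spectrum_iff]
  refine ⟨fun i => (v i : ℂ), ?_, ?_⟩
  · intro hc
    apply hv; funext i
    have := congrFun hc i
    simpa using this
  · funext i
    have := congrFun h i
    simp only [Matrix.mulVec, dotProduct, cm, Matrix.map_apply, Pi.smul_apply,
      smul_eq_mul] at this ⊢
    exact_mod_cast congrArg (Complex.ofReal) this

lemma real_eig_le_specRad (B : Matrix (Fin n) (Fin n) ℝ) {t : ℝ} {v : Fin n → ℝ} (hv : v ≠ 0)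
    (h : B.mulVec v = t • v) : |t| ≤ specRad B := by
  have := abs_le_specRad B (real_eig_mem B hv h)
  simpa using this

section nonemp2
attribute [local instance] Matrix.linftyOpNormedRing Matrix.linftyOpNormedAlgebra
  Matrix.linftyOpNormedSpace

lemma entry_nnnorm_le (M : Matrix (Fin n) (Fin n) ℂ) (i j : Fin n) : ‖M i j‖₊ ≤ ‖M‖₊ := by
  rw [Matrix.linfty_opNNNorm_def]
  calc ‖M i j‖₊ ≤ ∑ j' : Fin n, ‖M i j'‖₊ :=
        Finset.single_le_sum (f := fun j' => ‖M i j'‖₊) (fun _ _ => zero_le)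
          (Finset.mem_univ j)
  _ ≤ _ := Finset.le_sup (f := fun i => ∑ j' : Fin n, ‖M i j'‖₊) (Finset.mem_univ i)

lemma gelfand_pow_small (M : Matrix (Fin n) (Fin n) ℂ) (r : ℝ) (hr : 0 < r)
    (h : spectralRadius ℂ M < ENNReal.ofReal r) :
    ∀ᶠ k in atTop, ∀ i j, ‖(M ^ k) i j‖ ≤ r ^ k := by
  have hg := spectrum.pow_nnnorm_pow_one_div_tendsto_nhds_spectralRadius M
  have hev : ∀ᶠ k : ℕ in atTop, (‖M ^ k‖₊ : ENNReal) ^ (1 / (k : ℝ)) < ENNReal.ofReal r :=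
    hg.eventually_lt_const h
  filter_upwards [hev, eventually_ge_atTop 1] with k hk hk1 i j
  have hknz : (k : ℝ) ≠ 0 := by positivity
  have h1 : ((‖M ^ k‖₊ : ENNReal) ^ (1 / (k : ℝ))) ^ (k : ℝ) ≤ (ENNReal.ofReal r) ^ (k : ℝ) :=
    ENNReal.rpow_le_rpow hk.le (by positivity)
  rw [← ENNReal.rpow_mul, one_div, inv_mul_cancel₀ hknz, ENNReal.rpow_one] at h1
  rw [ENNReal.ofReal_rpow_of_pos hr] at h1
  have h3 : ‖M ^ k‖ ≤ r ^ (k : ℝ) := by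
    have := ENNReal.toReal_mono (by simp) h1
    rw [ENNReal.toReal_ofReal (by positivity)] at this
    simpa [ENNReal.coe_toReal] using this
  calc ‖(M ^ k) i j‖ ≤ ‖M ^ k‖ := entry_nnnorm_le (M ^ k) i j
  _ ≤ r ^ (k : ℝ) := h3
  _ = r ^ k := by rw [Real.rpow_natCast]

lemma spectralRadius_le (B : Matrix (Fin n) (Fin n) ℝ) :
    spectralRadius ℂ (cm B) ≤ ENNReal.ofReal (specRad B) := by
  rw [spectralRadius]
  refine iSup₂_le fun μ hμ => ?_
  have h1 : (‖μ‖₊ : ENNReal) = ENNReal.ofReal (‖μ‖) := by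
    rw [← coe_nnnorm, ENNReal.ofReal_coe_nnreal]
  rw [h1]
  exact ENNReal.ofReal_le_ofReal (abs_le_specRad B hμ)

/-- powers of a real matrix decay at any rate above the spectral radius -/
lemma pow_entry_small (B : Matrix (Fin n) (Fin n) ℝ) (r : ℝ) (hr : 0 < r)
    (h : specRad B < r) :
    ∀ᶠ k in atTop, ∀ i j, |(B ^ k) i j| ≤ r ^ k := by
  have h1 : spectralRadius ℂ (cm B) < ENNReal.ofReal r :=
    lt_of_le_of_lt (spectralRadius_le B) (by rwa [ENNReal.ofReal_lt_ofReal_iff hr])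
  filter_upwards [gelfand_pow_small (cm B) r hr h1] with k hk i j
  have h2 := hk i j
  rw [← cm_pow] at h2
  simpa [cm, Complex.norm_real] using h2

end nonemp2

lemma pow_entry_nonneg (C : Matrix (Fin n) (Fin n) ℝ) (hC : ∀ i j, 0 ≤ C i j) (m : ℕ) :
    ∀ i j, 0 ≤ (C ^ m) i j := by
  induction m with
  | zero => intro i j; by_cases h : i = j <;> simp [pow_zero, Matrix.one_apply, h]
  | succ m ih =>
    intro i j
    rw [pow_succ, Matrix.mul_apply]
    exact Finset.sum_nonneg fun l _ => mul_nonneg (ih i l) (hC l j)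

lemma neumann [Nonempty (Fin n)] (C : Matrix (Fin n) (Fin n) ℝ) (hC : ∀ i j, 0 ≤ C i j)
    {s : ℝ} (hs : specRad C < s) :
    ∃ N : Matrix (Fin n) (Fin n) ℝ, (s • 1 - C) * N = 1 ∧ N * (s • 1 - C) = 1 ∧
      ∀ i j, 0 ≤ N i j := by
  classical
  have hs0 : 0 < s := lt_of_le_of_lt (specRad_nonneg C) hs
  -- invertibility
  have hdet : IsUnit (s • (1 : Matrix (Fin n) (Fin n) ℝ) - C).det := by
    rw [isUnit_iff_ne_zero]
    intro h0
    obtain ⟨v, hv, hveq⟩ := (Matrix.exists_mulVec_eq_zero_iff).mpr h0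
    have heig : C.mulVec v = s • v := by
      have := hveq
      rw [Matrix.sub_mulVec, Matrix.smul_mulVec, Matrix.one_mulVec, sub_eq_zero] at this
      exact this.symm
    have := real_eig_le_specRad C hv heig
    rw [abs_of_pos hs0] at this
    exact absurd (lt_of_le_of_lt this hs) (lt_irrefl s)
  set A := s • (1 : Matrix (Fin n) (Fin n) ℝ) - C with hA
  refine ⟨A⁻¹, Matrix.mul_nonsing_inv A hdet, Matrix.nonsing_inv_mul A hdet, ?_⟩
  set N := A⁻¹
  -- partial sums
  set P : ℕ → Matrix (Fin n) (Fin n) ℝ :=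
    fun k => ∑ m ∈ Finset.range k, (s⁻¹) ^ (m + 1) • C ^ m with hP
  have hAP : ∀ k, A * P k = 1 - (s⁻¹) ^ k • C ^ k := by
    intro k
    induction k with
    | zero => simp [hP]
    | succ k ih =>
      show A * (∑ m ∈ Finset.range (k+1), (s⁻¹) ^ (m + 1) • C ^ m) = _
      have hPk : (∑ m ∈ Finset.range k, (s⁻¹) ^ (m + 1) • C ^ m) = P k := rfl
      rw [Finset.sum_range_succ, Matrix.mul_add, hPk, ih]
      have hAC : A * C ^ k = s • C ^ k - C ^ (k+1) := by
        rw [hA, Matrix.sub_mul, Matrix.smul_mul, Matrix.one_mul, pow_succ']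
      have ha : s⁻¹ ^ (k+1) * s = s⁻¹ ^ k := by
        rw [pow_succ]
        field_simp
      have hmul : A * ((s⁻¹) ^ (k + 1) • C ^ k)
          = (s⁻¹) ^ k • C ^ k - (s⁻¹) ^ (k + 1) • C ^ (k + 1) := by
        rw [Matrix.mul_smul, hAC, smul_sub, smul_smul, ha]
      rw [hmul]
      abel
  have hPN : ∀ k, P k = N - (s⁻¹) ^ k • (N * C ^ k) := by
    intro k
    have h1 : N * (A * P k) = P k := by
      rw [← Matrix.mul_assoc, Matrix.nonsing_inv_mul A hdet, Matrix.one_mul]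
    rw [hAP k] at h1
    rw [← h1, Matrix.mul_sub, Matrix.mul_one, Matrix.mul_smul]
  have hPpos : ∀ k i j, 0 ≤ P k i j := by
    intro k i j
    rw [hP]
    simp only [Finset.sum_apply, Matrix.sum_apply, Matrix.smul_apply, smul_eq_mul]
    refine Finset.sum_nonneg fun m _ => mul_nonneg (by positivity) (pow_entry_nonneg C hC m i j)
  intro i j
  -- limit argument
  set r := (specRad C + s) / 2 with hr
  have hr0 : 0 < r := by
    have := specRad_nonneg C; rw [hr]; linarith
  have hrs : r < s := by rw [hr]; linarith
  have hCr : specRad C < r := by rw [hr]; linarith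
  have hf : Tendsto (fun k => (s⁻¹) ^ k * ((N * C ^ k) i j)) atTop (𝓝 0) := by
    apply squeeze_zero_norm'
    · filter_upwards [pow_entry_small C r hr0 hCr] with k hk
      have hb : |(N * C ^ k) i j| ≤ (∑ l, |N i l|) * r ^ k := by
        rw [Matrix.mul_apply]
        calc |∑ l, N i l * (C ^ k) l j| ≤ ∑ l, |N i l * (C ^ k) l j| :=
              Finset.abs_sum_le_sum_abs _ _
        _ ≤ ∑ l, |N i l| * r ^ k := by
              refine Finset.sum_le_sum fun l _ => ?_
              rw [abs_mul]
              exact mul_le_mul_of_nonneg_left (hk l j) (abs_nonneg _)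
        _ = (∑ l, |N i l|) * r ^ k := by rw [Finset.sum_mul]
      have : ‖(s⁻¹) ^ k * ((N * C ^ k) i j)‖ ≤ (∑ l, |N i l|) * (r / s) ^ k := by
        rw [Real.norm_eq_abs, abs_mul, abs_pow, abs_of_pos (inv_pos.mpr hs0)]
        calc (s⁻¹) ^ k * |(N * C ^ k) i j| ≤ (s⁻¹) ^ k * ((∑ l, |N i l|) * r ^ k) := by
              exact mul_le_mul_of_nonneg_left hb (by positivity)
        _ = (∑ l, |N i l|) * (r / s) ^ k := by
              have hq : (r / s) ^ k = r ^ k * (s⁻¹) ^ k := by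
                rw [div_eq_mul_inv, mul_pow, inv_pow]
              rw [hq]; ring
      exact this
    · have hlt : |r / s| < 1 := by
        rw [abs_of_pos (by positivity)]
        rw [div_lt_one hs0]; exact hrs
      simpa using (tendsto_pow_atTop_nhds_zero_of_abs_lt_one hlt).const_mul (∑ l, |N i l|)
  have hPt : Tendsto (fun k => P k i j) atTop (𝓝 (N i j)) := by
    have : (fun k => P k i j) = fun k => N i j - (s⁻¹) ^ k * ((N * C ^ k) i j) := by
      funext k
      rw [hPN k, Matrix.sub_apply, Matrix.smul_apply, smul_eq_mul]
    rw [this]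
    simpa using tendsto_const_nhds.sub hf
  exact ge_of_tendsto hPt (Eventually.of_forall fun k => hPpos k i j)


lemma crossing {α : Type*} (R : α → α → Prop) {T : α → Prop} {a b : α}
    (h : Relation.ReflTransGen R a b) (ha : ¬ T a) (hb : T b) :
    ∃ p q, ¬ T p ∧ T q ∧ R p q := by
  induction h with
  | refl => exact absurd hb ha
  | @tail b' c hab hbc ih =>
    by_cases hTb : T b'
    · exact ih hTb
    · exact ⟨b', c, hTb, hb, hbc⟩

variable (B : Matrix (Fin n) (Fin n) ℝ)

/-- edge relation -/
def Edg (a b : Fin n) : Prop := a ≠ b ∧ 0 < B a b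

lemma mulVec_nonneg (hB : ∀ i j, 0 ≤ B i j) {v : Fin n → ℝ} (hv : ∀ i, 0 ≤ v i) :
    ∀ i, 0 ≤ B.mulVec v i := by
  intro i
  rw [Matrix.mulVec, dotProduct]
  exact Finset.sum_nonneg fun j _ => mul_nonneg (hB i j) (hv j)

lemma oneadd_mulVec_apply (v : Fin n → ℝ) (i : Fin n) :
    (1 + B).mulVec v i = v i + B.mulVec v i := by
  rw [Matrix.add_mulVec, Matrix.one_mulVec]; rfl

lemma pump (hB : ∀ i j, 0 ≤ B i j)
    (hconn : ∀ i j : Fin n, Relation.ReflTransGen (Edg B) i j)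
    (z : Fin n → ℝ) (hz0 : ∀ i, 0 ≤ z i) (hz : z ≠ 0) :
    ∀ i, 0 < ((1 + B) ^ n).mulVec z i := by
  classical
  -- nonnegativity of iterates
  have hpow : ∀ m, (∀ i, 0 ≤ ((1 + B) ^ m).mulVec z i) := by
    intro m
    induction m with
    | zero => simpa using hz0
    | succ m ih =>
      intro i
      have : ((1 + B) ^ (m+1)).mulVec z = (1 + B).mulVec (((1 + B) ^ m).mulVec z) := by
        rw [pow_succ', ← Matrix.mulVec_mulVec]
      rw [this, oneadd_mulVec_apply]
      exact add_nonneg (ih i) (mulVec_nonneg B hB ih i)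
  have hstep : ∀ m, ((1 + B) ^ (m+1)).mulVec z = (1 + B).mulVec (((1 + B) ^ m).mulVec z) := by
    intro m; rw [pow_succ', ← Matrix.mulVec_mulVec]
  have hmono : ∀ m i, ((1 + B) ^ m).mulVec z i ≤ ((1 + B) ^ (m+1)).mulVec z i := by
    intro m i
    rw [hstep m, oneadd_mulVec_apply]
    exact le_add_of_nonneg_right (mulVec_nonneg B hB (hpow m) i)
  -- the support grows
  set S : ℕ → Finset (Fin n) := fun m =>
    Finset.univ.filter (fun i => 0 < ((1 + B) ^ m).mulVec z i) with hS
  have hSmono : ∀ m, S m ⊆ S (m+1) := by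
    intro m i hi
    simp only [hS, Finset.mem_filter, Finset.mem_univ, true_and] at hi ⊢
    exact lt_of_lt_of_le hi (hmono m i)
  have hmain : ∀ m, (∀ i, 0 < ((1 + B) ^ m).mulVec z i) ∨ m + 1 ≤ (S m).card := by
    intro m
    induction m with
    | zero =>
      right
      obtain ⟨b, hb⟩ : ∃ b, 0 < z b := by
        by_contra h
        push_neg at h
        exact hz (funext fun i => le_antisymm (h i) (hz0 i))
      have : b ∈ S 0 := by
        simp only [hS, Finset.mem_filter, Finset.mem_univ, true_and]
        simpa using hb
      have := Finset.card_pos.mpr ⟨b, this⟩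
      omega
    | succ m ih =>
      by_cases hall : ∀ i, 0 < ((1 + B) ^ (m+1)).mulVec z i
      · exact Or.inl hall
      right
      rcases ih with hall' | hcard
      · exact absurd (fun i => lt_of_lt_of_le (hall' i) (hmono m i)) hall
      push_neg at hall
      obtain ⟨a, ha⟩ := hall
      have haS : a ∉ S m := by
        simp only [hS, Finset.mem_filter, Finset.mem_univ, true_and]
        intro hc
        exact absurd (lt_of_lt_of_le hc (hmono m a)) (not_lt.mpr ha)
      obtain ⟨b, hb⟩ : ∃ b, b ∈ S m := by
        have : 0 < (S m).card := by omega
        exact (Finset.card_pos.mp this)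
      have haT : ¬ (0 < ((1 + B) ^ m).mulVec z a) := by
        simpa [hS, Finset.mem_filter] using haS
      have hbT : 0 < ((1 + B) ^ m).mulVec z b := by
        simpa [hS, Finset.mem_filter] using hb
      obtain ⟨p, q, hp, hq, hpq⟩ := crossing (T := fun i => 0 < ((1 + B) ^ m).mulVec z i) (Edg B) (hconn a b) haT hbT
      -- p enters the support at stage m+1
      have hpS : p ∈ S (m+1) := by
        simp only [hS, Finset.mem_filter, Finset.mem_univ, true_and]
        rw [hstep m, oneadd_mulVec_apply]
        have h1 : 0 ≤ ((1 + B) ^ m).mulVec z p := hpow m p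
        have h2 : 0 < B.mulVec (((1 + B) ^ m).mulVec z) p := by
          have : B p q * ((1 + B) ^ m).mulVec z q ≤ B.mulVec (((1 + B) ^ m).mulVec z) p := by
            rw [Matrix.mulVec, dotProduct]
            exact Finset.single_le_sum
              (f := fun j => B p j * ((1 + B) ^ m).mulVec z j)
              (fun j _ => mul_nonneg (hB p j) (hpow m j)) (Finset.mem_univ q)
          exact lt_of_lt_of_le (mul_pos hpq.2 hq) this
        linarith
      have hpnS : p ∉ S m := by
        simp only [hS, Finset.mem_filter, Finset.mem_univ, true_and]
        exact hp
      have hss : S m ⊂ S (m+1) := ⟨hSmono m, fun hsub => hpnS (hsub hpS)⟩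
      have := Finset.card_lt_card hss
      omega
  rcases hmain n with h | h
  · exact h
  · exfalso
    have : (S n).card ≤ n := by
      have := Finset.card_le_univ (S n)
      simpa using this
    omega


/-- subinvariant vector from the largest eigenvalue -/
lemma exists_subinvariant [Nonempty (Fin n)] (C : Matrix (Fin n) (Fin n) ℝ)
    (hC : ∀ i j, 0 ≤ C i j) :
    ∃ y : Fin n → ℝ, (∀ i, 0 ≤ y i) ∧ y ≠ 0 ∧ ∀ i, specRad C * y i ≤ C.mulVec y i := by
  obtain ⟨μ, hμ, habs⟩ := exists_specRad_eq C
  obtain ⟨u, hu, hueq⟩ := (mem_spectrum_iff (cm C) μ).mp hμ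
  refine ⟨fun i => ‖u i‖, fun i => norm_nonneg _, ?_, ?_⟩
  · intro hc
    apply hu
    funext i
    have := congrFun hc i
    simpa using this
  · intro i
    have h1 : ‖(cm C).mulVec u i‖ = specRad C * ‖u i‖ := by
      rw [hueq]
      simp only [Pi.smul_apply, smul_eq_mul, norm_mul, habs]
    rw [← h1]
    have h2 : (cm C).mulVec u i = ∑ j, (C i j : ℂ) * u j := by
      rw [Matrix.mulVec, dotProduct]; rfl
    rw [h2]
    calc ‖∑ j, (C i j : ℂ) * u j‖ ≤ ∑ j, ‖(C i j : ℂ) * u j‖ :=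
          norm_sum_le _ _
    _ = ∑ j, C i j * ‖u j‖ := by
          refine Finset.sum_congr rfl fun j _ => ?_
          rw [norm_mul, Complex.norm_real, Real.norm_eq_abs, abs_of_nonneg (hC i j)]
    _ = C.mulVec (fun j => ‖u j‖) i := by
          rw [Matrix.mulVec, dotProduct]

/-- key subinvariance lemma: for an irreducible nonnegative matrix, any nonnegative
nonzero subinvariant vector at the spectral radius is a positive eigenvector -/
lemma subinvariant_eq [Nonempty (Fin n)] (B : Matrix (Fin n) (Fin n) ℝ)
    (hB : ∀ i j, 0 ≤ B i j)
    (hconn : ∀ i j : Fin n, Relation.ReflTransGen (Edg B) i j)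
    (y : Fin n → ℝ) (hy0 : ∀ i, 0 ≤ y i) (hy : y ≠ 0)
    (hsub : ∀ i, specRad B * y i ≤ B.mulVec y i) :
    B.mulVec y = specRad B • y ∧ (∀ i, 0 < y i) := by
  classical
  set ρ := specRad B with hρ
  set z : Fin n → ℝ := fun i => B.mulVec y i - ρ * y i with hz
  have hz0 : ∀ i, 0 ≤ z i := fun i => sub_nonneg.mpr (hsub i)
  have heq : B.mulVec y = ρ • y := by
    by_contra hne
    have hzne : z ≠ 0 := by
      intro hc
      apply hne
      funext i
      have := congrFun hc i
      simp only [hz, Pi.zero_apply, sub_eq_zero] at this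
      simpa using this
    -- pump everything up
    set w := ((1 + B) ^ n).mulVec y with hw
    have hwpos : ∀ i, 0 < w i := pump B hB hconn y hy0 hy
    set u := ((1 + B) ^ n).mulVec z with hu
    have hupos : ∀ i, 0 < u i := pump B hB hconn z hz0 hzne
    have hBw : B.mulVec w = ((1 + B) ^ n).mulVec (B.mulVec y) := by
      rw [hw, Matrix.mulVec_mulVec, Matrix.mulVec_mulVec]
      rw [((Commute.add_right (Commute.one_right B) (Commute.refl B)).pow_right n).eq]
    have hkey : ∀ i, B.mulVec w i - ρ * w i = u i := by
      intro i
      have hzy : z = B.mulVec y - ρ • y := by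
        funext j; simp [hz]
      have : u = ((1 + B) ^ n).mulVec (B.mulVec y) - ρ • ((1 + B) ^ n).mulVec y := by
        rw [hu, hzy, Matrix.mulVec_sub, Matrix.mulVec_smul]
      rw [hBw]
      have h2 := congrFun this i
      simp only [Pi.sub_apply, Pi.smul_apply, smul_eq_mul] at h2
      rw [h2, hw]
    -- minimal ratio c > ρ
    obtain ⟨i0, _, hmin⟩ := Finset.exists_min_image Finset.univ
      (fun i => B.mulVec w i / w i) Finset.univ_nonempty
    set c := B.mulVec w i0 / w i0 with hc
    have hcρ : ρ < c := by
      rw [hc, lt_div_iff₀ (hwpos i0)]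
      have := hkey i0
      nlinarith [hupos i0]
    have hcw : ∀ i, c * w i ≤ B.mulVec w i := by
      intro i
      have h1 : c ≤ B.mulVec w i / w i := hmin i (Finset.mem_univ i)
      rw [le_div_iff₀ (hwpos i)] at h1
      linarith
    obtain ⟨N, hN1, hN2, hN0⟩ := neumann B hB (s := c) (lt_of_le_of_lt (le_refl ρ) hcρ)
    -- w = N * ((c 1 - B) w) ≤ 0, contradiction
    have hwN : w = N.mulVec ((c • 1 - B).mulVec w) := by
      rw [Matrix.mulVec_mulVec, hN2, Matrix.one_mulVec]
    have hvle : ∀ i, (c • 1 - B).mulVec w i ≤ 0 := by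
      intro i
      rw [Matrix.sub_mulVec, Matrix.smul_mulVec, Matrix.one_mulVec]
      have := hcw i
      simp only [Pi.sub_apply, Pi.smul_apply, smul_eq_mul]
      linarith
    have : w (Classical.arbitrary (Fin n)) ≤ 0 := by
      set i := Classical.arbitrary (Fin n)
      rw [hwN]
      rw [Matrix.mulVec, dotProduct]
      exact Finset.sum_nonpos fun j _ => mul_nonpos_of_nonneg_of_nonpos (hN0 i j) (hvle j)
    exact absurd (hwpos _) (not_lt.mpr this)
  refine ⟨heq, ?_⟩
  -- positivity
  intro i
  rcases lt_or_eq_of_le (hy0 i) with h | h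
  · exact h
  exfalso
  obtain ⟨b, hb⟩ : ∃ b, 0 < y b := by
    by_contra hcon
    push_neg at hcon
    exact hy (funext fun j => le_antisymm (hcon j) (hy0 j))
  obtain ⟨p, q, hp, hq, hpq⟩ := crossing (T := fun k => 0 < y k) (Edg B) (hconn i b)
    (by simp [← h]) hb
  have hyp : y p = 0 := le_antisymm (not_lt.mp hp) (hy0 p)
  have h1 : B.mulVec y p = 0 := by
    have := congrFun heq p
    simp only [Pi.smul_apply, smul_eq_mul] at this
    rw [this, hyp, mul_zero]
  have h2 : 0 < B.mulVec y p := by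
    rw [Matrix.mulVec, dotProduct]
    have hterm : B p q * y q ≤ ∑ j, B p j * y j :=
      Finset.single_le_sum (f := fun j => B p j * y j)
        (fun j _ => mul_nonneg (hB p j) (hy0 j)) (Finset.mem_univ q)
    exact lt_of_lt_of_le (mul_pos hpq.2 hq) hterm
  rw [h1] at h2
  exact lt_irrefl 0 h2


/-- Perron-Frobenius for irreducible nonnegative matrices -/
lemma perron (hn : 2 ≤ n) (B : Matrix (Fin n) (Fin n) ℝ) (hB : ∀ i j, 0 ≤ B i j)
    (hconn : ∀ i j : Fin n, Relation.ReflTransGen (Edg B) i j) :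
    ∃ x : Fin n → ℝ, (∀ i, 0 < x i) ∧ B.mulVec x = specRad B • x ∧ 0 < specRad B := by
  have : Nonempty (Fin n) := ⟨⟨0, by omega⟩⟩
  obtain ⟨y, hy0, hy, hsub⟩ := exists_subinvariant B hB
  obtain ⟨heq, hpos⟩ := subinvariant_eq B hB hconn y hy0 hy hsub
  refine ⟨y, hpos, heq, ?_⟩
  rcases lt_or_eq_of_le (specRad_nonneg B) with h | h
  · exact h
  exfalso
  -- specRad B = 0 : B y = 0, but there is an edge into every column
  have hBy : B.mulVec y = 0 := by
    rw [heq, ← h]; funext i; simp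
  set j : Fin n := ⟨0, by omega⟩
  set i : Fin n := ⟨1, by omega⟩
  have hij : i ≠ j := by
    simp only [i, j, ne_eq, Fin.mk.injEq]
    omega
  obtain ⟨p, q, hp, hq, hpq⟩ := crossing (T := fun k => k = j) (Edg B) (hconn i j) hij rfl
  -- row p : (B y) p ≥ B p q * y q > 0
  have h2 : 0 < B.mulVec y p := by
    rw [Matrix.mulVec, dotProduct]
    have hterm : B p q * y q ≤ ∑ l, B p l * y l :=
      Finset.single_le_sum (f := fun l => B p l * y l)
        (fun l _ => mul_nonneg (hB p l) ((hpos l).le)) (Finset.mem_univ q)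
    exact lt_of_lt_of_le (mul_pos hpq.2 (hpos q)) hterm
  rw [hBy] at h2
  simp at h2

/-- strict comparison of spectral radii -/
lemma specRad_lt [Nonempty (Fin n)] (B : Matrix (Fin n) (Fin n) ℝ) (hB : ∀ i j, 0 ≤ B i j)
    (hconn : ∀ i j : Fin n, Relation.ReflTransGen (Edg B) i j)
    (C : Matrix (Fin n) (Fin n) ℝ) (hC0 : ∀ i j, 0 ≤ C i j)
    (hCB : ∀ i j, C i j ≤ B i j) (hne : C ≠ B) :
    specRad C < specRad B := by
  by_contra hcon
  push_neg at hcon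
  obtain ⟨y, hy0, hy, hsub⟩ := exists_subinvariant C hC0
  have hsubB : ∀ i, specRad B * y i ≤ B.mulVec y i := by
    intro i
    calc specRad B * y i ≤ specRad C * y i :=
          mul_le_mul_of_nonneg_right hcon (hy0 i)
    _ ≤ C.mulVec y i := hsub i
    _ ≤ B.mulVec y i := by
        rw [Matrix.mulVec, Matrix.mulVec, dotProduct, dotProduct]
        exact Finset.sum_le_sum fun l _ => mul_le_mul_of_nonneg_right (hCB i l) (hy0 l)
  obtain ⟨heq, hpos⟩ := subinvariant_eq B hB hconn y hy0 hy hsubB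
  apply hne
  funext i j
  -- rows coincide : sum of (B - C) i l * y l = 0
  have hBC : B.mulVec y i = C.mulVec y i := by
    have h1 : B.mulVec y i = specRad B * y i := by
      rw [heq]; simp
    have h2 := hsubB i
    have h3 := hsub i
    have h4 : C.mulVec y i ≤ B.mulVec y i := by
      rw [Matrix.mulVec, Matrix.mulVec, dotProduct, dotProduct]
      exact Finset.sum_le_sum fun l _ => mul_le_mul_of_nonneg_right (hCB i l) (hy0 l)
    have h5 : specRad C * y i ≤ specRad B * y i := by
      nlinarith [hy0 i, hsub i]
    nlinarith [mul_le_mul_of_nonneg_right hcon (hy0 i)]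
  have hsum : ∑ l, (B i l - C i l) * y l = 0 := by
    have : ∑ l, (B i l - C i l) * y l = B.mulVec y i - C.mulVec y i := by
      rw [Matrix.mulVec, Matrix.mulVec, dotProduct, dotProduct,
        ← Finset.sum_sub_distrib]
      refine Finset.sum_congr rfl fun l _ => by ring
    rw [this, hBC, sub_self]
  have hterm := (Finset.sum_eq_zero_iff_of_nonneg
    (fun l _ => mul_nonneg (sub_nonneg.mpr (hCB i l)) (hy0 l))).mp hsum j (Finset.mem_univ j)
  have := hpos j
  have : B i j - C i j = 0 := by
    rcases mul_eq_zero.mp hterm with h | h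
    · exact h
    · exact absurd h (ne_of_gt (hpos j))
  linarith

lemma specRad_le_of_weighted [Nonempty (Fin n)] (B : Matrix (Fin n) (Fin n) ℝ)
    (hB : ∀ i j, 0 ≤ B i j) (x : Fin n → ℝ) (hx : ∀ i, 0 < x i) (c : ℝ)
    (hle : ∀ i, B.mulVec x i ≤ c * x i) : specRad B ≤ c := by
  rw [specRad]
  refine csSup_le ((spectrum_nonempty (B.map Complex.ofReal)).image _) ?_
  rintro r ⟨μ, hμ, rfl⟩
  obtain ⟨u, hu, hueq⟩ := (mem_spectrum_iff (B.map Complex.ofReal) μ).mp hμ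
  obtain ⟨i0, _, hmax⟩ := Finset.exists_max_image Finset.univ
    (fun i => ‖u i‖ / x i) Finset.univ_nonempty
  set m := ‖u i0‖ / x i0 with hm
  have hmpos : 0 < m := by
    obtain ⟨k, hk⟩ : ∃ k, u k ≠ 0 := by
      by_contra hcon; push_neg at hcon
      exact hu (funext hcon)
    have h1 : 0 < ‖u k‖ / x k :=
      div_pos (by simpa using (norm_pos_iff.mpr hk)) (hx k)
    exact lt_of_lt_of_le h1 (hmax k (Finset.mem_univ k))
  have hub : ∀ j, ‖u j‖ ≤ m * x j := by
    intro j
    have := hmax j (Finset.mem_univ j)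
    rw [div_le_iff₀ (hx j)] at this
    linarith [this]
  have hcomp : (B.map Complex.ofReal).mulVec u i0 = ∑ j, (B i0 j : ℂ) * u j := by
    rw [Matrix.mulVec, dotProduct]; rfl
  have hmx : m * x i0 = ‖u i0‖ := by
    rw [hm, div_mul_cancel₀ _ (ne_of_gt (hx i0))]
  have h1 : ‖μ‖ * (m * x i0) = ‖(B.map Complex.ofReal).mulVec u i0‖ := by
    rw [hueq]
    simp only [Pi.smul_apply, smul_eq_mul, norm_mul]
    rw [hmx]
  have h2 : ‖(B.map Complex.ofReal).mulVec u i0‖ ≤ m * (c * x i0) := by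
    rw [hcomp]
    calc ‖∑ j, (B i0 j : ℂ) * u j‖ ≤ ∑ j, ‖(B i0 j : ℂ) * u j‖ :=
          norm_sum_le _ _
    _ ≤ ∑ j, B i0 j * (m * x j) := by
          refine Finset.sum_le_sum fun j _ => ?_
          rw [norm_mul, Complex.norm_real, Real.norm_eq_abs, abs_of_nonneg (hB i0 j)]
          exact mul_le_mul_of_nonneg_left (hub j) (hB i0 j)
    _ = m * B.mulVec x i0 := by
          rw [Matrix.mulVec, dotProduct, Finset.mul_sum]
          exact Finset.sum_congr rfl fun j _ => by ring
    _ ≤ m * (c * x i0) := mul_le_mul_of_nonneg_left (hle i0) hmpos.le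
  have h3 : ‖μ‖ * (m * x i0) ≤ c * (m * x i0) := by
    rw [h1]; calc ‖(B.map Complex.ofReal).mulVec u i0‖ ≤ m * (c * x i0) := h2
    _ = c * (m * x i0) := by ring
  have hpos : 0 < m * x i0 := mul_pos hmpos (hx i0)
  calc (fun z => ‖z‖) μ = ‖μ‖ := rfl
  _ ≤ c := le_of_mul_le_mul_right h3 hpos

end Aux
end AuxSect

open Aux Filter Topology

theorem fsai_LA_singular_M (n : ℕ) (hn : 2 ≤ n)
    (A : Matrix (Fin n) (Fin n) ℝ)
    (hA : IsSingularMMatrix A) (hirr : IsIrreducibleMatrix A)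
    (S : Set (Fin n × Fin n))
    (hS1 : S ⊆ {p : Fin n × Fin n | p.2 ≤ p.1})
    (hS2 : ∀ i : Fin n, (i, i) ∈ S)
    (hS3 : ((⟨n - 1, by omega⟩ : Fin n), (⟨n - 2, by omega⟩ : Fin n)) ∉ S)
    (L : Matrix (Fin n) (Fin n) ℝ) (hL : IsFSAILowerFactor A L S) :
    IsSingularMMatrix (L * A) := by
  classical
  have hne : Nonempty (Fin n) := ⟨⟨0, by omega⟩⟩
  obtain ⟨hZA, B, hB0, hAeq⟩ := hA
  set s := specRad B with hs
  -- off-diagonal entries of A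
  have hAoff : ∀ i j : Fin n, i ≠ j → A i j = - B i j := by
    intro i j hij
    rw [hAeq]
    simp [Matrix.sub_apply, Matrix.smul_apply, Matrix.one_apply_ne hij]
  -- connectivity of B
  have hconn : ∀ i j : Fin n, Relation.ReflTransGen (Edg B) i j := by
    intro i j
    induction hirr i j with
    | refl => exact Relation.ReflTransGen.refl
    | @tail b c hab hbc ih =>
      rcases eq_or_ne b c with h | h
      · exact h ▸ ih
      · refine Relation.ReflTransGen.tail ih ⟨h, ?_⟩
        have := hAoff b c h
        rcases lt_or_eq_of_le (hB0 b c) with h2 | h2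
        · exact h2
        · exfalso; apply hbc; rw [this, ← h2, neg_zero]
  -- Perron vector
  obtain ⟨x, hx, hBx, hspos⟩ := perron hn B hB0 hconn
  have hAx : A.mulVec x = 0 := by
    rw [hAeq, Matrix.sub_mulVec, Matrix.smul_mulVec, Matrix.one_mulVec, hBx, sub_self]
  -- nonnegativity of L
  have hLpos : ∀ i k : Fin n, 0 ≤ L i k := by
    intro i k
    -- find an index missing from row i of the pattern
    obtain ⟨l, hl⟩ : ∃ l : Fin n, (i, l) ∉ S := by
      by_cases hi : (i : ℕ) + 1 < n
      · refine ⟨⟨n - 1, by omega⟩, fun hc => ?_⟩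
        have := hS1 hc
        simp only [Set.mem_setOf_eq] at this
        have : (n - 1 : ℕ) ≤ (i : ℕ) := this
        omega
      · have hival : (i : ℕ) = n - 1 := by have := i.2; omega
        have : i = (⟨n - 1, by omega⟩ : Fin n) := Fin.ext hival
        rw [this]
        exact ⟨⟨n - 2, by omega⟩, hS3⟩
    -- padded matrix
    set Bb : Matrix (Fin n) (Fin n) ℝ :=
      Matrix.of (fun p q => if (i, p) ∈ S ∧ (i, q) ∈ S then B p q else 0) with hBb
    have hBb0 : ∀ p q, 0 ≤ Bb p q := by
      intro p q
      rw [hBb]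
      by_cases h : (i, p) ∈ S ∧ (i, q) ∈ S <;> simp [Matrix.of_apply, h, hB0 p q]
    have hBble : ∀ p q, Bb p q ≤ B p q := by
      intro p q
      rw [hBb]
      by_cases h : (i, p) ∈ S ∧ (i, q) ∈ S <;> simp [Matrix.of_apply, h, hB0 p q]
    have hBbne : Bb ≠ B := by
      -- there is an edge leaving l
      obtain ⟨t, ht⟩ : ∃ t : Fin n, t ≠ l := by
        have : Nontrivial (Fin n) := Fin.nontrivial_iff_two_le.mpr hn
        exact exists_ne l
      obtain ⟨p, q, hp, hq, hpq⟩ := crossing (T := fun k => k ≠ l) (Edg B) (hconn l t)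
        (by simp) ht
      push_neg at hp
      intro hc
      have h1 : Bb p q = 0 := by
        rw [hBb]
        simp only [Matrix.of_apply, hp]
        rw [if_neg]
        intro hmem
        exact hl hmem.1
      rw [hc] at h1
      exact absurd h1 (ne_of_gt hpq.2)
    have hlt : specRad Bb < s := specRad_lt B hB0 hconn Bb hBb0 hBble hBbne
    obtain ⟨N, hN1, hN2, hN0⟩ := neumann Bb hBb0 hlt
    set Ab : Matrix (Fin n) (Fin n) ℝ := s • 1 - Bb with hAb
    -- the i-th row of L solves the padded system
    have hvec : Matrix.vecMul (L i) Ab = Pi.single i 1 := by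
      funext j
      rw [Matrix.vecMul, dotProduct]
      by_cases hj : (i, j) ∈ S
      · have hLA := hL.2.2 (i, j) hj
        have hsum : ∑ k, L i k * Ab k j = ∑ k, L i k * A k j := by
          refine Finset.sum_congr rfl fun k _ => ?_
          by_cases hk : (i, k) ∈ S
          · congr 1
            rw [hAb, hAeq]
            simp only [Matrix.sub_apply, Matrix.smul_apply, smul_eq_mul]
            congr 1
            rw [hBb]
            simp [Matrix.of_apply, hk, hj]
          · rw [hL.2.1 (i, k) hk, zero_mul, zero_mul]
        rw [hsum]
        have : (∑ k, L i k * A k j) = (L * A) i j := by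
          rw [Matrix.mul_apply]
        rw [this, hLA]
        by_cases hij2 : i = j
        · subst hij2; simp [Pi.single_apply]
        · simp [Pi.single_apply, hij2, Ne.symm hij2]
      · have hsum : ∑ k, L i k * Ab k j = 0 := by
          refine Finset.sum_eq_zero fun k _ => ?_
          by_cases hk : (i, k) ∈ S
          · have hkj : k ≠ j := fun hc => hj (hc ▸ hk)
            have : Ab k j = 0 := by
              rw [hAb, hBb]
              simp only [Matrix.sub_apply, Matrix.smul_apply, smul_eq_mul,
                Matrix.one_apply_ne hkj, Matrix.of_apply, mul_zero]
              rw [if_neg (fun hmem => hj hmem.2), sub_zero]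
            rw [this, mul_zero]
          · rw [hL.2.1 (i, k) hk, zero_mul]
        rw [hsum]
        have hij2 : j ≠ i := fun hc => hj (hc ▸ hS2 i)
        simp [Pi.single_apply, hij2]
    -- L i = e_i * N
    have hrow : L i = Matrix.vecMul (Pi.single i 1) N := by
      have h1 : Matrix.vecMul (Matrix.vecMul (L i) Ab) N = L i := by
        rw [Matrix.vecMul_vecMul, hN1, Matrix.vecMul_one]
      rw [← h1, hvec]
    have : L i k = N i k := by
      rw [hrow, Matrix.vecMul, dotProduct]
      rw [Finset.sum_eq_single i]
      · simp
      · intro b _ hb; simp [Pi.single_apply, hb]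
      · intro hb; exact absurd (Finset.mem_univ i) hb
    rw [this]
    exact hN0 i k
  -- the product M
  set M := L * A with hM
  have hdiag : ∀ i, M i i = 1 := by
    intro i
    have := hL.2.2 (i, i) (hS2 i)
    simpa using this
  have hZM : IsZMatrix M := by
    intro i j hij
    by_cases hij2 : (i, j) ∈ S
    · have h := hL.2.2 (i, j) hij2
      simp only [if_neg hij] at h
      show (L * A) i j ≤ 0
      rw [h]
    · rw [hM, Matrix.mul_apply]
      refine Finset.sum_nonpos fun k _ => ?_
      by_cases hk : k = j
      · subst hk
        rw [hL.2.1 (i, k) hij2, zero_mul]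
      · exact mul_nonpos_of_nonneg_of_nonpos (hLpos i k)
          (by rw [hAoff k j hk]; simp [hB0 k j])
  have hMx : M.mulVec x = 0 := by
    rw [hM, ← Matrix.mulVec_mulVec, hAx, Matrix.mulVec_zero]
  -- the new nonnegative matrix
  set B' : Matrix (Fin n) (Fin n) ℝ := 1 - M with hB'
  have hB'0 : ∀ i j, 0 ≤ B' i j := by
    intro i j
    rw [hB', Matrix.sub_apply]
    by_cases h : i = j
    · subst h; rw [hdiag i, Matrix.one_apply_eq]; norm_num
    · rw [Matrix.one_apply_ne h]
      have := hZM i j h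
      linarith
  have hB'x : B'.mulVec x = x := by
    rw [hB', Matrix.sub_mulVec, Matrix.one_mulVec, hMx, sub_zero]
  have hxne : x ≠ 0 := by
    intro hc
    have := hx ⟨0, by omega⟩
    rw [hc] at this
    simp at this
  have hrad : specRad B' = 1 := by
    refine le_antisymm ?_ ?_
    · exact specRad_le_of_weighted B' hB'0 x hx 1 (fun i => by rw [hB'x]; simp)
    · have := real_eig_le_specRad B' hxne (by rw [hB'x, one_smul])
      simpa using this
  refine ⟨hZM, B', hB'0, ?_⟩
  rw [hrad, one_smul, hB', sub_sub_cancel]
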